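/- Let (X,Y) be discrete with joint distribution μ, η : 𝒳 → 𝒰, U = η(X). Then for any conditional distribution v from 𝒰 to distributions on 𝒴, E[−log v(Y|η(X))] ≥ I(X;Y|U) + H(Y|X), with equality if and only if v(·|u) = μ_{Y|U}(·|u) for every u with μ_U(u) > 0. -/

import Mathlib

open Finset

noncomputable section

/-- Marginal distribution of the first coordinate of a joint distribution. -/
def margX {X Y : Type*} [Fintype Y] (μ : X → Y → ℝ) (x : X) : ℝ := ∑ y, μ x y

/-- Marginal distribution of the second coordinate. -/
def margY {X Y : Type*} [Fintype X] (μ : X → Y → ℝ) (y : Y) : ℝ := ∑ x, μ x y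

/-- Distribution of `U = η X`. -/
def margU {X Y U : Type*} [Fintype X] [Fintype Y] [DecidableEq U]
    (μ : X → Y → ℝ) (η : X → U) (u : U) : ℝ :=
  ∑ x, if η x = u then margX μ x else 0

/-- Joint probability `P(Y = y, η X = u)`. -/
def margYU {X Y U : Type*} [Fintype X] [DecidableEq U]
    (μ : X → Y → ℝ) (η : X → U) (y : Y) (u : U) : ℝ :=
  ∑ x, if η x = u then μ x y else 0

/-- Joint distribution of the pair `(η X, Y)`. -/
def jointUY {X Y U : Type*} [Fintype X] [DecidableEq U]
    (μ : X → Y → ℝ) (η : X → U) : U → Y → ℝ :=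
  fun u y => margYU μ η y u

/-- Shannon mutual information `I(X;Y)` of a joint distribution (natural log). -/
def MI {X Y : Type*} [Fintype X] [Fintype Y] (μ : X → Y → ℝ) : ℝ :=
  ∑ x, ∑ y, μ x y * Real.log (μ x y / (margX μ x * margY μ y))

/-- Conditional Shannon entropy `H(Y|X)`. -/
def condEnt {X Y : Type*} [Fintype X] [Fintype Y] (μ : X → Y → ℝ) : ℝ :=
  -∑ x, ∑ y, μ x y * Real.log (μ x y / margX μ x)

/-- Conditional mutual information `I(X;Y|U)` where `U = η X` is a deterministic
function of `X`. -/
def condMI {X Y U : Type*} [Fintype X] [Fintype Y] [DecidableEq U]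
    (μ : X → Y → ℝ) (η : X → U) : ℝ :=
  ∑ x, ∑ y, μ x y *
    Real.log (μ x y * margU μ η (η x) / (margX μ x * margYU μ η y (η x)))

/-- `μ` is a probability distribution on `X × Y`. -/
def IsDist {X Y : Type*} [Fintype X] [Fintype Y] (μ : X → Y → ℝ) : Prop :=
  (∀ x y, 0 ≤ μ x y) ∧ ∑ x, ∑ y, μ x y = 1

/-- `X` and `Y` are conditionally independent given `U = η X`: for every `u` with
`P(U = u) > 0`, `P(X = x, Y = y | U = u) = P(X = x | U = u) · P(Y = y | U = u)`
(stated multiplied through by `P(U = u)²`). -/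
def CondIndep {X Y U : Type*} [Fintype X] [Fintype Y] [DecidableEq U]
    (μ : X → Y → ℝ) (η : X → U) : Prop :=
  ∀ u, 0 < margU μ η u → ∀ x y,
    (if η x = u then μ x y else 0) * margU μ η u =
      (if η x = u then margX μ x else 0) * margYU μ η y u

/-- Cross-entropy risk `E_{(X,Y)∼μ}[− log v(Y|X)]` of a predictive conditional
distribution `v`. -/
def risk {X Y : Type*} [Fintype X] [Fintype Y] (μ : X → Y → ℝ) (v : X → Y → ℝ) : ℝ :=
  ∑ x, ∑ y, μ x y * (-Real.log (v x y))

/-- Kullback–Leibler divergence between two joint distributions on `X × Y`. -/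
def KL {X Y : Type*} [Fintype X] [Fintype Y] (μ ν : X → Y → ℝ) : ℝ :=
  ∑ x, ∑ y, μ x y * Real.log (μ x y / ν x y)

/-- Averaged conditional KL divergence `D(μ_{Y|X} ‖ v | μ_X)`. -/
def avgKL {X Y : Type*} [Fintype X] [Fintype Y] (μ : X → Y → ℝ) (v : X → Y → ℝ) : ℝ :=
  ∑ x, margX μ x * ∑ y,
    (μ x y / margX μ x) * Real.log ((μ x y / margX μ x) / v x y)

/-- Averaged conditional KL divergence in the latent domain:
`D(μ_{Y|U} ‖ v | μ_U)` for the encoder `η`. -/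
def decKL {X Y U : Type*} [Fintype X] [Fintype Y] [Fintype U] [DecidableEq U]
    (μ : X → Y → ℝ) (η : X → U) (v : U → Y → ℝ) : ℝ :=
  ∑ u, margU μ η u * ∑ y,
    (margYU μ η y u / margU μ η u) *
      Real.log ((margYU μ η y u / margU μ η u) / v u y)

lemma gibbs {Y : Type*} [Fintype Y] (p q : Y → ℝ) (hp : ∀ y, 0 ≤ p y)
    (hq : ∀ y, 0 ≤ q y) (hp1 : ∑ y, p y = 1) (hq1 : ∑ y, q y = 1)
    (hpq : ∀ y, 0 < p y → 0 < q y) :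
    0 ≤ ∑ y, p y * Real.log (p y / q y) ∧
      ((∑ y, p y * Real.log (p y / q y)) = 0 ↔ ∀ y, q y = p y) := by
  set g : Y → ℝ := fun y => p y * Real.log (p y / q y) - p y + q y with hg
  have hsum : ∑ y, g y = ∑ y, p y * Real.log (p y / q y) := by
    simp [hg, Finset.sum_add_distrib, Finset.sum_sub_distrib, hp1, hq1]
  have hgnn : ∀ y, 0 ≤ g y := by
    intro y
    rcases eq_or_lt_of_le (hp y) with h0 | h0
    · simp [hg, ← h0, hq y]
    · have hqy := hpq y h0
      have hlog : Real.log (q y / p y) ≤ q y / p y - 1 :=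
        Real.log_le_sub_one_of_pos (by positivity)
      rw [Real.log_div (ne_of_gt hqy) (ne_of_gt h0)] at hlog
      have h2 : p y - q y ≤ p y * Real.log (p y / q y) := by
        rw [Real.log_div (ne_of_gt h0) (ne_of_gt hqy)]
        have hfield : p y * (q y / p y - 1) = q y - p y := by field_simp
        nlinarith [mul_le_mul_of_nonneg_left hlog (le_of_lt h0)]
      simp only [hg]
      linarith
  constructor
  · rw [← hsum]
    exact Finset.sum_nonneg fun y _ => hgnn y
  · rw [← hsum, Finset.sum_eq_zero_iff_of_nonneg fun y _ => hgnn y]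
    constructor
    · intro h y
      have hy := h y (Finset.mem_univ y)
      simp only [hg] at hy
      rcases eq_or_lt_of_le (hp y) with h0 | h0
      · rw [← h0] at hy ⊢
        simpa using hy
      · have hqy := hpq y h0
        by_contra hne
        have hne' : q y / p y ≠ 1 := by
          intro h1
          rw [div_eq_one_iff_eq (ne_of_gt h0)] at h1
          exact hne h1
        have hlog : Real.log (q y / p y) < q y / p y - 1 :=
          Real.log_lt_sub_one_of_pos (by positivity) hne'
        rw [Real.log_div (ne_of_gt hqy) (ne_of_gt h0)] at hlog
        have h2 : p y - q y < p y * Real.log (p y / q y) := by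
          rw [Real.log_div (ne_of_gt h0) (ne_of_gt hqy)]
          have hfield : p y * (q y / p y - 1) = q y - p y := by field_simp
          nlinarith [mul_lt_mul_of_pos_left hlog h0]
        linarith
    · intro h y _
      rcases eq_or_lt_of_le (hp y) with h0 | h0
      · have := h y
        simp [hg, ← h0] at this ⊢
        simp [this, ← h0]
      · simp [hg, h y, div_self (ne_of_gt h0)]

/-- `E[−log v(Y|η(X))] ≥ I(X;Y|U) + H(Y|X)`, with equality iff
`v(·|u) = μ_{Y|U}(·|u)` for every `u` with `μ_U(u) > 0`. -/
theorem stmt6 {X Y U : Type*} [Fintype X] [Fintype Y] [Fintype U] [DecidableEq U]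
    (μ : X → Y → ℝ) (η : X → U) (v : U → Y → ℝ) (hμ : IsDist μ)
    (hv0 : ∀ u y, 0 ≤ v u y) (hv1 : ∀ u, ∑ y, v u y = 1)
    (hvpos : ∀ u y, 0 < margYU μ η y u → 0 < v u y) :
    condMI μ η + condEnt μ ≤ risk μ (fun x y => v (η x) y) ∧
      (risk μ (fun x y => v (η x) y) = condMI μ η + condEnt μ ↔
        ∀ u, 0 < margU μ η u → ∀ y, v u y = margYU μ η y u / margU μ η u) := by
  obtain ⟨hμ0, hμ1⟩ := hμ
  have hmX : ∀ x, 0 ≤ margX μ x := fun x => Finset.sum_nonneg fun y _ => hμ0 x y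
  have hmYU : ∀ y u, 0 ≤ margYU μ η y u := fun y u =>
    Finset.sum_nonneg fun x _ => by split <;> simp [hμ0]
  have hmU : ∀ u, 0 ≤ margU μ η u := fun u =>
    Finset.sum_nonneg fun x _ => by split <;> simp [hmX]
  have hμ_le_mX : ∀ x y, μ x y ≤ margX μ x := fun x y =>
    Finset.single_le_sum (fun y' _ => hμ0 x y') (Finset.mem_univ y)
  have hμ_le_mYU : ∀ x y, μ x y ≤ margYU μ η y (η x) := by
    intro x y
    have := Finset.single_le_sum
      (f := fun x' => if η x' = η x then μ x' y else 0)
      (fun i _ => by by_cases h : η i = η x <;> simp [h, hμ0]) (Finset.mem_univ x)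
    simpa [margYU] using this
  have hmX_le_mU : ∀ x, margX μ x ≤ margU μ η (η x) := by
    intro x
    have := Finset.single_le_sum
      (f := fun x' => if η x' = η x then margX μ x' else 0)
      (fun i _ => by by_cases h : η i = η x <;> simp [h, hmX]) (Finset.mem_univ x)
    simpa [margU] using this
  have hmYU_le_mU : ∀ y u, margYU μ η y u ≤ margU μ η u := by
    intro y u
    refine Finset.sum_le_sum fun x _ => ?_
    split
    · exact hμ_le_mX x y
    · exact le_refl 0
  have hsum_mYU : ∀ u, ∑ y, margYU μ η y u = margU μ η u := by
    intro u
    simp only [margYU, margU]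
    rw [Finset.sum_comm]
    refine Finset.sum_congr rfl fun x _ => ?_
    split <;> simp [margX]
  set c : U → Y → ℝ :=
    fun u y => Real.log (margYU μ η y u / (margU μ η u * v u y)) with hc
  have regroup :
      ∑ x, ∑ y, μ x y * c (η x) y = ∑ u, ∑ y, margYU μ η y u * c u y := by
    rw [show (∑ x, ∑ y, μ x y * c (η x) y) = ∑ y, ∑ x, μ x y * c (η x) y from
          Finset.sum_comm,
        show (∑ u, ∑ y, margYU μ η y u * c u y) = ∑ y, ∑ u, margYU μ η y u * c u y
          from Finset.sum_comm]
    refine Finset.sum_congr rfl fun y _ => ?_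
    calc ∑ x, μ x y * c (η x) y
        = ∑ x, ∑ u, (if η x = u then μ x y * c u y else 0) := by
          refine Finset.sum_congr rfl fun x _ => ?_
          rw [Finset.sum_ite_eq]
          simp
      _ = ∑ u, ∑ x, (if η x = u then μ x y * c u y else 0) := Finset.sum_comm
      _ = ∑ u, margYU μ η y u * c u y := by
          refine Finset.sum_congr rfl fun u _ => ?_
          rw [margYU, Finset.sum_mul]
          refine Finset.sum_congr rfl fun x _ => ?_
          split <;> simp
  have key : risk μ (fun x y => v (η x) y) - (condMI μ η + condEnt μ) =
      ∑ u, ∑ y, margYU μ η y u * c u y := by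
    rw [← regroup, risk, condMI, condEnt]
    rw [show ∀ a b c' : ℝ, a - (b + -c') = a - b + c' from fun _ _ _ => by ring]
    rw [← Finset.sum_sub_distrib, ← Finset.sum_add_distrib]
    refine Finset.sum_congr rfl fun x _ => ?_
    rw [← Finset.sum_sub_distrib, ← Finset.sum_add_distrib]
    refine Finset.sum_congr rfl fun y _ => ?_
    rcases eq_or_lt_of_le (hμ0 x y) with h0 | h0
    · simp [← h0]
    · have hmx : 0 < margX μ x := lt_of_lt_of_le h0 (hμ_le_mX x y)
      have hmyu : 0 < margYU μ η y (η x) := lt_of_lt_of_le h0 (hμ_le_mYU x y)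
      have hmu : 0 < margU μ η (η x) := lt_of_lt_of_le hmx (hmX_le_mU x)
      have hv : 0 < v (η x) y := hvpos (η x) y hmyu
      simp only [hc]
      rw [Real.log_div (ne_of_gt hmyu) (ne_of_gt (mul_pos hmu hv)),
          Real.log_mul (ne_of_gt hmu) (ne_of_gt hv),
          Real.log_div (ne_of_gt (mul_pos h0 hmu)) (ne_of_gt (mul_pos hmx hmyu)),
          Real.log_mul (ne_of_gt h0) (ne_of_gt hmu),
          Real.log_mul (ne_of_gt hmx) (ne_of_gt hmyu),
          Real.log_div (ne_of_gt h0) (ne_of_gt hmx)]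
      ring
  set T : U → ℝ := fun u => ∑ y, margYU μ η y u * c u y with hTdef
  have hT : ∀ u, 0 ≤ T u ∧
      (T u = 0 ↔ (0 < margU μ η u → ∀ y, v u y = margYU μ η y u / margU μ η u)) := by
    intro u
    rcases eq_or_lt_of_le (hmU u) with h0 | h0
    · have hz : ∀ y, margYU μ η y u = 0 := fun y =>
        le_antisymm (h0 ▸ hmYU_le_mU y u) (hmYU y u)
      have hT0 : T u = 0 := by simp [hTdef, hz]
      refine ⟨le_of_eq hT0.symm, ?_⟩
      constructor
      · intro _ hpos
        rw [← h0] at hpos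
        exact absurd hpos (lt_irrefl 0)
      · intro _
        exact hT0
    · set p : Y → ℝ := fun y => margYU μ η y u / margU μ η u with hpdef
      have hp : ∀ y, 0 ≤ p y := fun y => div_nonneg (hmYU y u) (le_of_lt h0)
      have hp1 : ∑ y, p y = 1 := by
        rw [hpdef]
        rw [← Finset.sum_div, hsum_mYU, div_self (ne_of_gt h0)]
      have hpmul : ∀ y, margYU μ η y u = margU μ η u * p y := fun y => by
        rw [hpdef]; field_simp
      have hpq : ∀ y, 0 < p y → 0 < v u y := by
        intro y hy
        refine hvpos u y ?_
        rw [hpmul y]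
        exact mul_pos h0 hy
      obtain ⟨hge, hiff⟩ := gibbs p (v u) hp (fun y => hv0 u y) hp1 (hv1 u) hpq
      have hTe : T u = margU μ η u * ∑ y, p y * Real.log (p y / v u y) := by
        rw [hTdef, Finset.mul_sum]
        refine Finset.sum_congr rfl fun y _ => ?_
        have h2 : margYU μ η y u / (margU μ η u * v u y) = p y / v u y := by
          rw [hpmul y, mul_div_mul_left _ _ (ne_of_gt h0)]
        simp only [hc]
        rw [h2, hpmul y]
        ring
      constructor
      · rw [hTe]
        exact mul_nonneg (le_of_lt h0) hge
      · rw [hTe]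
        constructor
        · intro h _ y
          rcases mul_eq_zero.mp h with h' | h'
          · exact absurd h' (ne_of_gt h0)
          · exact hiff.mp h' y
        · intro h
          rw [hiff.mpr (h h0), mul_zero]
  have hTsum : 0 ≤ ∑ u, T u := Finset.sum_nonneg fun u _ => (hT u).1
  constructor
  · linarith [key]
  · constructor
    · intro h u hu y
      have hS : ∑ u, T u = 0 := by linarith [key]
      have := (Finset.sum_eq_zero_iff_of_nonneg fun u _ => (hT u).1).mp hS u
        (Finset.mem_univ u)
      exact (hT u).2.mp this hu y
    · intro h
      have hz : ∀ u, T u = 0 := fun u => (hT u).2.mpr fun hu y => h u hu y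
      have : ∑ u, T u = 0 := Finset.sum_eq_zero fun u _ => hz u
      linarith [key]
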